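/- Let A : U → Ũ and C : ℝ^{r,s} → ℝ^{s,r} satisfy A^τ J̃_z A = J_{C^τ(z)} for all z, with C C^τ = C^τ C = −Id and r ≠ s. Then for any orthonormal vectors z_1, z_2 of ℝ^{r,s}: A^τ A commutes with J_{z_1} J_{z_2}, i.e. A^τ A J_{z_1} J_{z_2} = J_{z_1} J_{z_2} A^τ A. -/

import Mathlib

/-- The standard pseudo-Euclidean bilinear form of signature `(r, n - r)` on `ℝⁿ`. -/
noncomputable def stdForm (n r : ℕ) : LinearMap.BilinForm ℝ (Fin n → ℝ) :=
  Matrix.toBilin' (Matrix.diagonal fun i : Fin n => if (i : ℕ) < r then (1 : ℝ) else -1)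

/-- Under the isomorphism relation `Aᵀ J̃_z A = J_{Cᵀ z}` with
`C Cᵀ = Cᵀ C = -Id` and `r ≠ s`, for any orthonormal `z₁, z₂` of `ℝ^{r,s}` the operator
`Aᵀ A` commutes with `J_{z₁} J_{z₂}`. -/
theorem AtauA_commutes_with_even_product
    {U W : Type*}
    [AddCommGroup U] [Module ℝ U] [FiniteDimensional ℝ U]
    [AddCommGroup W] [Module ℝ W] [FiniteDimensional ℝ W]
    (n r s : ℕ) (hn : r + s = n) (hrs : r ≠ s)
    (BU : LinearMap.BilinForm ℝ U) (hBUnd : BU.Nondegenerate)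
    (hBUsymm : ∀ x y : U, BU x y = BU y x)
    (BW : LinearMap.BilinForm ℝ W) (hBWnd : BW.Nondegenerate)
    (hBWsymm : ∀ x y : W, BW x y = BW y x)
    (J : (Fin n → ℝ) →ₗ[ℝ] Module.End ℝ U)
    (hJ : ∀ z, J z * J z = -(stdForm n r z z) • (1 : Module.End ℝ U))
    (hJskew : ∀ (z : Fin n → ℝ) (x y : U), BU (J z x) y + BU x (J z y) = 0)
    (J' : (Fin n → ℝ) →ₗ[ℝ] Module.End ℝ W)
    (hJ' : ∀ w, J' w * J' w = -(stdForm n s w w) • (1 : Module.End ℝ W))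
    (hJ'skew : ∀ (w : Fin n → ℝ) (x y : W), BW (J' w x) y + BW x (J' w y) = 0)
    (A : U →ₗ[ℝ] W) (hA : Function.Bijective A)
    (C : (Fin n → ℝ) →ₗ[ℝ] (Fin n → ℝ)) (hC : Function.Bijective C)
    (Aτ : W →ₗ[ℝ] U) (hAτ : ∀ (x : U) (y : W), BW (A x) y = BU x (Aτ y))
    (Cτ : (Fin n → ℝ) →ₗ[ℝ] (Fin n → ℝ))
    (hCτ : ∀ z w : Fin n → ℝ, stdForm n s (C z) w = stdForm n r z (Cτ w))
    (hrel : ∀ w : Fin n → ℝ,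
      (Aτ ∘ₗ (J' w : W →ₗ[ℝ] W) ∘ₗ A : U →ₗ[ℝ] U) = J (Cτ w))
    (hCCτ : C ∘ₗ Cτ = -LinearMap.id) (hCτC : Cτ ∘ₗ C = -LinearMap.id)
    (z₁ z₂ : Fin n → ℝ)
    (hz₁ : stdForm n r z₁ z₁ = 1 ∨ stdForm n r z₁ z₁ = -1)
    (hz₂ : stdForm n r z₂ z₂ = 1 ∨ stdForm n r z₂ z₂ = -1)
    (hz₁₂ : stdForm n r z₁ z₂ = 0) :
    (Aτ ∘ₗ A : Module.End ℝ U) * (J z₁ * J z₂) =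
      (J z₁ * J z₂) * (Aτ ∘ₗ A : Module.End ℝ U) := by
  classical
  -- Aτ is injective.
  have hAτinj : Function.Injective Aτ := by
    intro y₁ y₂ h
    have h0 : ∀ x : W, BW x (y₁ - y₂) = 0 := by
      intro x
      obtain ⟨u, rfl⟩ := hA.2 x
      rw [hAτ, map_sub, h, sub_self, map_zero]
    have hz : y₁ - y₂ = 0 := hBWnd.1 _ (fun x => by rw [hBWsymm]; exact h0 x)
    exact sub_eq_zero.mp hz
  -- S := A ∘ Aτ is a bijective endomorphism of W.
  set S : Module.End ℝ W := A ∘ₗ Aτ with hSdef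
  have hSinj : Function.Injective S := fun x y h => hAτinj (hA.1 h)
  have hSsurj : Function.Surjective S := (LinearMap.injective_iff_surjective).mp hSinj
  let e : W ≃ₗ[ℝ] W := LinearEquiv.ofBijective S ⟨hSinj, hSsurj⟩
  set Si : Module.End ℝ W := e.symm.toLinearMap with hSidef
  have hSSi : S * Si = 1 := by
    ext x; exact e.apply_symm_apply x
  have hSiS : Si * S = 1 := by
    ext x; exact e.symm_apply_apply x
  -- The conjugation map Φ.
  set Φ : Module.End ℝ W → Module.End ℝ U :=
    fun X => (Aτ ∘ₗ X ∘ₗ A : U →ₗ[ℝ] U) with hΦdef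
  have hΦinj : ∀ X Y, Φ X = Φ Y → X = Y := by
    intro X Y h
    ext w
    obtain ⟨u, rfl⟩ := hA.2 w
    exact hAτinj (LinearMap.congr_fun h u)
  have hΦmul : ∀ X Y, Φ X * Φ Y = Φ (X * S * Y) := by
    intro X Y; ext u; rfl
  have hTl : ∀ X, (Aτ ∘ₗ A : Module.End ℝ U) * Φ X = Φ (S * X) := by
    intro X; ext u; rfl
  have hTr : ∀ X, Φ X * (Aτ ∘ₗ A : Module.End ℝ U) = Φ (X * S) := by
    intro X; ext u; rfl
  have hΦsmul : ∀ (c : ℝ) (X), Φ (c • X) = c • Φ X := by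
    intro c X; ext u; simp [hΦdef]
  have hΦSi : Φ Si = 1 := by
    ext u
    apply hA.1
    exact e.apply_symm_apply (A u)
  -- Cτ (-C z) = z
  have hw : ∀ z : Fin n → ℝ, Cτ (-(C z)) = z := by
    intro z
    have h1 : Cτ (C z) = -z := by
      have := LinearMap.congr_fun hCτC z
      simpa using this
    rw [map_neg, h1, neg_neg]
  -- the sign computation
  have hδ : ∀ z : Fin n → ℝ,
      stdForm n s (-(C z)) (-(C z)) = -(stdForm n r z z) := by
    intro z
    have h1 : stdForm n s (C z) (C z) = stdForm n r z (Cτ (C z)) := hCτ z (C z)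
    have h2 : Cτ (C z) = -z := by
      have := LinearMap.congr_fun hCτC z
      simpa using this
    rw [h2] at h1
    have : stdForm n s (-(C z)) (-(C z)) = stdForm n s (C z) (C z) := by
      simp
    rw [this, h1]
    simp
  -- the key relation : S * Q = -(Q * Si) for Q = J' (-C z) with unit z.
  have hkey : ∀ z : Fin n → ℝ,
      (stdForm n r z z = 1 ∨ stdForm n r z z = -1) →
      S * J' (-(C z)) = -(J' (-(C z)) * Si) := by
    intro z hz
    set Q : Module.End ℝ W := J' (-(C z)) with hQdef
    set δ : ℝ := stdForm n s (-(C z)) (-(C z)) with hδdef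
    have hδval : δ = -(stdForm n r z z) := hδ z
    have hδne : δ ≠ 0 := by
      rcases hz with h | h <;> rw [hδval, h] <;> norm_num
    have hΦQ : Φ Q = J z := by
      have := hrel (-(C z))
      rw [hw z] at this
      exact this
    have h1 : Φ (Q * S * Q) = Φ (δ • Si) := by
      rw [← hΦmul, hΦQ, hΦsmul, hΦSi, hJ z, hδval]
    have h2 : Q * S * Q = δ • Si := hΦinj _ _ h1
    have hQQ : Q * Q = -δ • (1 : Module.End ℝ W) := hJ' (-(C z))
    have h4 : (-δ) • (S * Q) = δ • (Q * Si) := by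
      calc (-δ) • (S * Q) = ((-δ) • (1 : Module.End ℝ W)) * (S * Q) := by
            rw [smul_mul_assoc, one_mul]
        _ = (Q * Q) * (S * Q) := by rw [hQQ]
        _ = Q * (Q * S * Q) := by noncomm_ring
        _ = Q * (δ • Si) := by rw [h2]
        _ = δ • (Q * Si) := by rw [mul_smul_comm]
    have h5 : -(S * Q) = Q * Si := by
      apply smul_right_injective (Module.End ℝ W) hδne
      show δ • (-(S * Q)) = δ • (Q * Si)
      rw [smul_neg, ← neg_smul]
      exact h4
    rw [← h5, neg_neg]
  have hk₁ := hkey z₁ hz₁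
  have hk₂ := hkey z₂ hz₂
  set Q₁ : Module.End ℝ W := J' (-(C z₁)) with hQ₁def
  set Q₂ : Module.End ℝ W := J' (-(C z₂)) with hQ₂def
  have hJ₁ : J z₁ = Φ Q₁ := by
    have := hrel (-(C z₁)); rw [hw z₁] at this; exact this.symm
  have hJ₂ : J z₂ = Φ Q₂ := by
    have := hrel (-(C z₂)); rw [hw z₂] at this; exact this.symm
  have e1 : S * (Q₁ * S * Q₂) = -(Q₁ * Q₂) := by
    calc S * (Q₁ * S * Q₂) = (S * Q₁) * (S * Q₂) := by noncomm_ring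
      _ = (-(Q₁ * Si)) * (S * Q₂) := by rw [hk₁]
      _ = -(Q₁ * ((Si * S) * Q₂)) := by noncomm_ring
      _ = -(Q₁ * Q₂) := by rw [hSiS, one_mul]
  have e2 : (Q₁ * S * Q₂) * S = -(Q₁ * Q₂) := by
    calc (Q₁ * S * Q₂) * S = Q₁ * ((S * Q₂) * S) := by noncomm_ring
      _ = Q₁ * ((-(Q₂ * Si)) * S) := by rw [hk₂]
      _ = -((Q₁ * Q₂) * (Si * S)) := by noncomm_ring
      _ = -(Q₁ * Q₂) := by rw [hSiS, mul_one]
  rw [hJ₁, hJ₂, hΦmul, hTl, hTr, e1, e2]
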